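/- arXiv:2402.17548 — 6 statements merged into one kernel-verified Lean document; each statement's English description precedes it below -/
import Mathlib

section
/- For every nonzero vector U ∈ ℝ⁴ and every vector V ∈ ℝ⁴ orthogonal to U, there exist real numbers γ₁,γ₂,γ₃ such that R(γ₁,γ₂,γ₃)·U = V. -/
open Matrix

def Lmat (b1 b2 b3 : ℝ) : Matrix (Fin 4) (Fin 4) ℝ :=
  !![0, -b1, -b2, -b3;
     b1, 0, -b3, b2;
     b2, b3, 0, -b1;
     b3, -b2, b1, 0]

def Rmat (g1 g2 g3 : ℝ) : Matrix (Fin 4) (Fin 4) ℝ :=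
  !![0, -g1, -g2, -g3;
     g1, 0, g3, -g2;
     g2, -g3, 0, g1;
     g3, g2, -g1, 0]

/-- For any nonzero U ∈ ℝ⁴ and any V orthogonal to U there are γ₁,γ₂,γ₃ with
R(γ₁,γ₂,γ₃)·U = V. -/
theorem stmt_4 (U V : Fin 4 → ℝ) (hU : U ≠ 0) (hUV : U ⬝ᵥ V = 0) :
    ∃ g1 g2 g3 : ℝ, Rmat g1 g2 g3 *ᵥ U = V := by
  set N : ℝ := U 0 ^ 2 + U 1 ^ 2 + U 2 ^ 2 + U 3 ^ 2 with hNdef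
  have hN : N ≠ 0 := by
    intro h
    rw [hNdef] at h
    apply hU
    have e0 : U 0 = 0 := by
      have := sq_nonneg (U 0)
      nlinarith [sq_nonneg (U 1), sq_nonneg (U 2), sq_nonneg (U 3), sq_nonneg (U 0)]
    have e1 : U 1 = 0 := by
      nlinarith [sq_nonneg (U 1), sq_nonneg (U 2), sq_nonneg (U 3), sq_nonneg (U 0)]
    have e2 : U 2 = 0 := by
      nlinarith [sq_nonneg (U 1), sq_nonneg (U 2), sq_nonneg (U 3), sq_nonneg (U 0)]
    have e3 : U 3 = 0 := by
      nlinarith [sq_nonneg (U 1), sq_nonneg (U 2), sq_nonneg (U 3), sq_nonneg (U 0)]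
    funext j
    fin_cases j <;> simp [e0, e1, e2, e3]
  have hUV' : U 0 * V 0 + U 1 * V 1 + U 2 * V 2 + U 3 * V 3 = 0 := by
    simpa [dotProduct, Fin.sum_univ_four] using hUV
  refine ⟨(U 0 * V 1 - U 1 * V 0 - U 2 * V 3 + U 3 * V 2) / N,
          (U 0 * V 2 - U 2 * V 0 - U 3 * V 1 + U 1 * V 3) / N,
          (U 0 * V 3 - U 3 * V 0 - U 1 * V 2 + U 2 * V 1) / N, ?_⟩
  funext i
  have key : ∀ j : Fin 4, (Rmat ((U 0 * V 1 - U 1 * V 0 - U 2 * V 3 + U 3 * V 2) / N)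
      ((U 0 * V 2 - U 2 * V 0 - U 3 * V 1 + U 1 * V 3) / N)
      ((U 0 * V 3 - U 3 * V 0 - U 1 * V 2 + U 2 * V 1) / N) *ᵥ U) j = V j := by
    intro j
    fin_cases j
    · show (Rmat _ _ _ *ᵥ U) 0 = V 0
      simp only [Rmat, mulVec, dotProduct, Fin.sum_univ_four, Matrix.cons_val', Matrix.cons_val_zero,
        Matrix.cons_val_one, Matrix.head_cons, Matrix.empty_val', Matrix.cons_val_fin_one,
        Matrix.head_fin_const, Matrix.cons_val_two, Matrix.tail_cons, Matrix.cons_val_three, Matrix.of_apply]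
      field_simp
      linear_combination (-(U 0)) * hUV'
    · show (Rmat _ _ _ *ᵥ U) 1 = V 1
      simp only [Rmat, mulVec, dotProduct, Fin.sum_univ_four, Matrix.cons_val', Matrix.cons_val_zero,
        Matrix.cons_val_one, Matrix.head_cons, Matrix.empty_val', Matrix.cons_val_fin_one,
        Matrix.head_fin_const, Matrix.cons_val_two, Matrix.tail_cons, Matrix.cons_val_three, Matrix.of_apply]
      field_simp
      linear_combination (-(U 1)) * hUV'
    · show (Rmat _ _ _ *ᵥ U) 2 = V 2
      simp only [Rmat, mulVec, dotProduct, Fin.sum_univ_four, Matrix.cons_val', Matrix.cons_val_zero,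
        Matrix.cons_val_one, Matrix.head_cons, Matrix.empty_val', Matrix.cons_val_fin_one,
        Matrix.head_fin_const, Matrix.cons_val_two, Matrix.tail_cons, Matrix.cons_val_three, Matrix.of_apply]
      field_simp
      linear_combination (-(U 2)) * hUV'
    · show (Rmat _ _ _ *ᵥ U) 3 = V 3
      simp only [Rmat, mulVec, dotProduct, Fin.sum_univ_four, Matrix.cons_val', Matrix.cons_val_zero,
        Matrix.cons_val_one, Matrix.head_cons, Matrix.empty_val', Matrix.cons_val_fin_one,
        Matrix.head_fin_const, Matrix.cons_val_two, Matrix.tail_cons, Matrix.cons_val_three, Matrix.of_apply]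
      field_simp
      linear_combination (-(U 3)) * hUV'
  exact key i
end

section
/- For every nonzero vector U ∈ ℝ⁴ and every vector V ∈ ℝ⁴ orthogonal to U, there exist real numbers β₁,β₂,β₃ such that L(β₁,β₂,β₃)·U = V. -/
open Matrix

/-- For any nonzero U ∈ ℝ⁴ and any V orthogonal to U there are β₁,β₂,β₃ with
L(β₁,β₂,β₃)·U = V. -/
theorem stmt_5 (U V : Fin 4 → ℝ) (hU : U ≠ 0) (hUV : U ⬝ᵥ V = 0) :
    ∃ b1 b2 b3 : ℝ, Lmat b1 b2 b3 *ᵥ U = V := by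
  set u0 := U 0 with h0; set u1 := U 1 with h1; set u2 := U 2 with h2; set u3 := U 3 with h3
  set v0 := V 0; set v1 := V 1; set v2 := V 2; set v3 := V 3
  have hn : u0^2 + u1^2 + u2^2 + u3^2 ≠ 0 := by
    intro h
    apply hU
    funext i
    fin_cases i
    · show u0 = 0; nlinarith [sq_nonneg u0, sq_nonneg u1, sq_nonneg u2, sq_nonneg u3]
    · show u1 = 0; nlinarith [sq_nonneg u0, sq_nonneg u1, sq_nonneg u2, sq_nonneg u3]
    · show u2 = 0; nlinarith [sq_nonneg u0, sq_nonneg u1, sq_nonneg u2, sq_nonneg u3]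
    · show u3 = 0; nlinarith [sq_nonneg u0, sq_nonneg u1, sq_nonneg u2, sq_nonneg u3]
  have hd : u0*v0 + u1*v1 + u2*v2 + u3*v3 = 0 := by
    simpa [dotProduct, Fin.sum_univ_four] using hUV
  set n := u0^2 + u1^2 + u2^2 + u3^2 with hndef
  refine ⟨(v1*u0 - v0*u1 + v3*u2 - v2*u3)/n,
          (v2*u0 - v0*u2 + v1*u3 - v3*u1)/n,
          (v3*u0 - v0*u3 + v2*u1 - v1*u2)/n, ?_⟩
  funext i
  have key : ∀ i, (Lmat ((v1*u0 - v0*u1 + v3*u2 - v2*u3)/n) ((v2*u0 - v0*u2 + v1*u3 - v3*u1)/n)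
      ((v3*u0 - v0*u3 + v2*u1 - v1*u2)/n) *ᵥ U) i = V i := by
    intro i
    fin_cases i <;>
      simp only [Lmat, Matrix.mulVec, dotProduct, Fin.sum_univ_four, Matrix.cons_val',
        Matrix.cons_val_zero, Matrix.cons_val_one, Matrix.head_cons, Matrix.empty_val',
        Matrix.cons_val_fin_one, Matrix.head_fin_const, Fin.isValue, Matrix.cons_val_two,
        Matrix.cons_val_three, Matrix.tail_cons, Matrix.of_apply, Matrix.cons_val, Fin.zero_eta, Fin.mk_one, Fin.reduceFinMk, ← h0, ← h1, ← h2, ← h3]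
    · show _ = v0
      field_simp; linear_combination (-u0) * hd
    · show _ = v1
      field_simp; linear_combination (-u1) * hd
    · show _ = v2
      field_simp; linear_combination (-u2) * hd
    · show _ = v3
      field_simp; linear_combination (-u3) * hd
  exact key i
end

section
/- Let U, V, W be n×n real skew-symmetric matrices with [U,V] = [U,W] = 0. If U has no nonzero eigenvalue of multiplicity ≥ 2 and the eigenvalue 0 of U has multiplicity ≤ 2 (all multiplicities counted over ℂ), then [V,W] = 0. -/
open Matrix Polynomial

lemma charpoly_conj_aux {R : Type*} [CommRing R] {n : ℕ}
    (P Q M : Matrix (Fin n) (Fin n) R) (h1 : P * Q = 1) :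
    (P * M * Q).charpoly = M.charpoly := by
  have hPQ : P.map (C : R →+* R[X]) * Q.map (C : R →+* R[X]) = 1 := by
    rw [← Matrix.map_mul, h1]
    simp
  have hch : charmatrix (P * M * Q)
      = P.map (C : R →+* R[X]) * charmatrix M * Q.map (C : R →+* R[X]) := by
    unfold charmatrix
    rw [Matrix.mul_sub, Matrix.sub_mul]
    congr 1
    · rw [scalar_apply, ← smul_one_eq_diagonal, mul_smul_comm, smul_mul_assoc, mul_one, hPQ]
    · simp only [RingHom.mapMatrix_apply]
      rw [← Matrix.map_mul, ← Matrix.map_mul]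
  rw [Matrix.charpoly, Matrix.charpoly, hch, det_mul, det_mul]
  have h2 : (P.map (C : R →+* R[X])).det * (Q.map (C : R →+* R[X])).det = 1 := by
    rw [← det_mul, hPQ, det_one]
  calc (P.map (C : R →+* R[X])).det * (charmatrix M).det * (Q.map (C : R →+* R[X])).det
      = (charmatrix M).det * ((P.map (C : R →+* R[X])).det * (Q.map (C : R →+* R[X])).det) := by
        ring
    _ = (charmatrix M).det := by rw [h2, mul_one]

lemma charpoly_diag {R : Type*} [CommRing R] {n : ℕ} (f : Fin n → R) :
    (diagonal f).charpoly = ∏ i, (X - C (f i)) := by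
  have h : charmatrix (diagonal f) = diagonal (fun i => X - C (f i)) := by
    ext i j
    by_cases h : i = j
    · subst h; simp
    · simp [charmatrix_apply_ne _ _ _ h, diagonal_apply_ne _ h, diagonal_apply_ne f h]
  rw [Matrix.charpoly, h, det_diagonal]

lemma prod_roots_count {K : Type*} [Field K] [DecidableEq K] {n : ℕ} (f : Fin n → K) (b : K) :
    (∏ i, (X - C (f i))).rootMultiplicity b
      = (Finset.univ.filter (fun i => f i = b)).card := by
  have h1 : (∏ i, (X - C (f i))) = ((Finset.univ.val.map f).map fun a => X - C a).prod := by
    rw [Finset.prod_eq_multiset_prod, Multiset.map_map]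
    rfl
  rw [← Polynomial.count_roots, h1, roots_multiset_prod_X_sub_C, Multiset.count_map]
  have h2 : (Finset.univ.filter (fun i => f i = b)) = (Finset.univ.filter (fun i => b = f i)) := by
    apply Finset.filter_congr; intro x _; simp [eq_comm]
  rw [h2]
  rfl

lemma conj_mul_aux {R : Type*} [CommRing R] {n : ℕ}
    (S Q A B : Matrix (Fin n) (Fin n) R) (h : Q * S = 1) :
    (S * A * Q) * (S * B * Q) = S * (A * B) * Q := by
  simp only [Matrix.mul_assoc]
  rw [← Matrix.mul_assoc Q S, h, Matrix.one_mul]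

/-- Let U, V, W be real skew-symmetric n×n matrices with [U,V] = [U,W] = 0.
If no nonzero complex eigenvalue of U has algebraic multiplicity ≥ 2 and the
eigenvalue 0 has algebraic multiplicity ≤ 2, then [V,W] = 0. -/
theorem stmt_9 (n : ℕ) (U V W : Matrix (Fin n) (Fin n) ℝ)
    (hU : Uᵀ = -U) (hV : Vᵀ = -V) (hW : Wᵀ = -W)
    (hUV : U * V = V * U) (hUW : U * W = W * U)
    (hmult : ∀ μ : ℂ, μ ≠ 0 →
      ((U.map (algebraMap ℝ ℂ)).charpoly).rootMultiplicity μ ≤ 1)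
    (hmult0 : ((U.map (algebraMap ℝ ℂ)).charpoly).rootMultiplicity 0 ≤ 2) :
    V * W = W * V := by
  classical
  set A : Matrix (Fin n) (Fin n) ℂ := U.map (algebraMap ℝ ℂ) with hAdef
  -- A is skew-Hermitian
  have hAT : Aᴴ = -A := by
    ext i j
    have : U j i = -U i j := by
      have := congrFun (congrFun hU i) j
      simpa using this
    simp [hAdef, conjTranspose_apply, Matrix.map_apply, this, Complex.conj_ofReal]
  have hH : (Complex.I • A).IsHermitian := by
    show (Complex.I • A)ᴴ = Complex.I • A
    rw [conjTranspose_smul, hAT]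
    simp [Complex.star_def, Complex.conj_I]
  set P : Matrix (Fin n) (Fin n) ℂ := (hH.eigenvectorUnitary : Matrix (Fin n) (Fin n) ℂ)
    with hPdef
  set ev : Fin n → ℝ := hH.eigenvalues with hevdef
  set d : Fin n → ℂ := fun i => (-Complex.I) * (ev i) with hddef
  have hP2 : P * star P = 1 := mem_unitaryGroup_iff.mp hH.eigenvectorUnitary.2
  have hP1 : star P * P = 1 := mem_unitaryGroup_iff'.mp hH.eigenvectorUnitary.2
  have hAspec : A = P * diagonal d * star P := by
    have h0 : A = (-Complex.I) • (Complex.I • A) := by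
      rw [smul_smul, neg_mul, Complex.I_mul_I, neg_neg, one_smul]
    have h1 : (-Complex.I) • diagonal (RCLike.ofReal ∘ ev) = diagonal d := by
      rw [← diagonal_smul]
      congr 1
    rw [h0, hH.spectral_theorem]
    simp only [Unitary.conjStarAlgAut_apply, Unitary.coe_star]
    rw [← hPdef, ← Matrix.smul_mul, ← Matrix.mul_smul, h1]
  have hcpA : A.charpoly = ∏ i, (X - C (d i)) := by
    rw [hAspec, charpoly_conj_aux _ _ _ hP2, charpoly_diag]
  have hdcount : ∀ μ : ℂ, (Finset.univ.filter (fun i => d i = μ)).card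
      = A.charpoly.rootMultiplicity μ := by
    intro μ
    rw [hcpA, prod_roots_count]
  -- U² is symmetric
  have hU2 : (U * U).IsHermitian := by
    show (U * U)ᴴ = U * U
    have : (U * U)ᴴ = (U * U)ᵀ := by
      ext i j; simp [conjTranspose_apply]
    rw [this, transpose_mul, hU]
    simp
  set Qm : Matrix (Fin n) (Fin n) ℝ := (hU2.eigenvectorUnitary : Matrix (Fin n) (Fin n) ℝ)
    with hQdef
  set e : Fin n → ℝ := hU2.eigenvalues with hedef
  have hQ2 : Qm * star Qm = 1 := mem_unitaryGroup_iff.mp hU2.eigenvectorUnitary.2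
  have hQ1 : star Qm * Qm = 1 := mem_unitaryGroup_iff'.mp hU2.eigenvectorUnitary.2
  have hspec2 : U * U = Qm * diagonal e * star Qm := by
    have h1 : RCLike.ofReal ∘ e = e := by
      funext i; simp [RCLike.ofReal_real_eq_id]
    have := hU2.spectral_theorem
    rw [h1] at this
    exact this
  -- charpoly of U² over ℝ
  have hcpU2 : (U * U).charpoly = ∏ i, (X - C (e i)) := by
    rw [hspec2, charpoly_conj_aux _ _ _ hQ2, charpoly_diag]
  -- charpoly of A² over ℂ
  have hA2 : A * A = P * diagonal (fun i => d i * d i) * star P := by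
    rw [hAspec, conj_mul_aux _ _ _ _ hP1, diagonal_mul_diagonal]
  have hcpA2 : (A * A).charpoly = ∏ i, (X - C (d i * d i)) := by
    rw [hA2, charpoly_conj_aux _ _ _ hP2, charpoly_diag]
  -- link the two
  have hlink : (∏ i, (X - C ((e i : ℂ)))) = ∏ i, (X - C (d i * d i)) := by
    calc (∏ i, (X - C ((e i : ℂ))))
        = ((U * U).charpoly).map (algebraMap ℝ ℂ) := by
          rw [hcpU2, Polynomial.map_prod]
          simp
      _ = ((U * U).map (algebraMap ℝ ℂ)).charpoly := (Matrix.charpoly_map _ _).symm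
      _ = (A * A).charpoly := by rw [Matrix.map_mul]
      _ = ∏ i, (X - C (d i * d i)) := hcpA2
  -- counting: every eigenvalue-level-set of U² has ≤ 2 elements
  have hddcard : ∀ c : ℂ, (Finset.univ.filter (fun i => d i * d i = c)).card ≤ 2 := by
    intro c
    by_cases hc : c = 0
    · subst hc
      have h1 : (Finset.univ.filter (fun i => d i * d i = 0))
          = Finset.univ.filter (fun i => d i = 0) := by
        apply Finset.filter_congr; intro i _; simp [mul_self_eq_zero]
      rw [h1, hdcount 0]
      exact hmult0
    · obtain ⟨s, hs⟩ := IsAlgClosed.exists_pow_nat_eq c (n := 2) (by norm_num)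
      have hs0 : s ≠ 0 := by
        intro h; apply hc; rw [← hs, h]; ring
      have hsub : (Finset.univ.filter (fun i => d i * d i = c))
          ⊆ (Finset.univ.filter (fun i => d i = s)) ∪ (Finset.univ.filter (fun i => d i = -s)) := by
        intro i hi
        simp only [Finset.mem_filter, Finset.mem_univ, true_and] at hi
        have h5 : d i * d i = s ^ 2 := by rw [hi, hs]
        have h4 : (d i - s) * (d i + s) = 0 := by linear_combination h5
        rcases mul_eq_zero.mp h4 with h6 | h6
        · simp only [Finset.mem_union, Finset.mem_filter, Finset.mem_univ, true_and]
          exact Or.inl (by linear_combination h6)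
        · simp only [Finset.mem_union, Finset.mem_filter, Finset.mem_univ, true_and]
          exact Or.inr (by linear_combination h6)
      calc (Finset.univ.filter (fun i => d i * d i = c)).card
          ≤ ((Finset.univ.filter (fun i => d i = s))
            ∪ (Finset.univ.filter (fun i => d i = -s))).card := Finset.card_le_card hsub
        _ ≤ (Finset.univ.filter (fun i => d i = s)).card
            + (Finset.univ.filter (fun i => d i = -s)).card := Finset.card_union_le _ _
        _ ≤ 1 + 1 := by
            have g1 : (Finset.univ.filter (fun i => d i = s)).card ≤ 1 := by
              rw [hdcount s]; exact hmult s hs0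
            have g2 : (Finset.univ.filter (fun i => d i = -s)).card ≤ 1 := by
              rw [hdcount (-s)]; exact hmult (-s) (neg_ne_zero.mpr hs0)
            omega
        _ = 2 := rfl
  have hecard : ∀ c : ℝ, (Finset.univ.filter (fun i => e i = c)).card ≤ 2 := by
    intro c
    have h1 : (Finset.univ.filter (fun i => e i = c))
        = Finset.univ.filter (fun i => (e i : ℂ) = (c : ℂ)) := by
      apply Finset.filter_congr; intro i _; simp
    have h2 := prod_roots_count (fun i => (e i : ℂ)) (c : ℂ)
    have h3 := prod_roots_count (fun i => d i * d i) (c : ℂ)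
    rw [hlink, h3] at h2
    rw [h1, ← h2]
    exact hddcard _
  -- conjugate V and W by Qm
  set V' : Matrix (Fin n) (Fin n) ℝ := star Qm * V * Qm with hV'def
  set W' : Matrix (Fin n) (Fin n) ℝ := star Qm * W * Qm with hW'def
  have hdiagU2 : star Qm * (U * U) * Qm = diagonal e := by
    rw [hspec2]
    simp only [← Matrix.mul_assoc]
    rw [hQ1, Matrix.one_mul, Matrix.mul_assoc, hQ1, Matrix.mul_one]
  have hcommV : V * (U * U) = (U * U) * V := by
    calc V * (U * U) = (V * U) * U := by rw [Matrix.mul_assoc]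
      _ = (U * V) * U := by rw [hUV]
      _ = U * (V * U) := by rw [Matrix.mul_assoc]
      _ = U * (U * V) := by rw [hUV]
      _ = (U * U) * V := by rw [Matrix.mul_assoc]
  have hcommW : W * (U * U) = (U * U) * W := by
    calc W * (U * U) = (W * U) * U := by rw [Matrix.mul_assoc]
      _ = (U * W) * U := by rw [hUW]
      _ = U * (W * U) := by rw [Matrix.mul_assoc]
      _ = U * (U * W) := by rw [hUW]
      _ = (U * U) * W := by rw [Matrix.mul_assoc]
  have hVd : V' * diagonal e = diagonal e * V' := by
    rw [← hdiagU2, hV'def, conj_mul_aux _ _ _ _ hQ2, conj_mul_aux _ _ _ _ hQ2, hcommV]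
  have hWd : W' * diagonal e = diagonal e * W' := by
    rw [← hdiagU2, hW'def, conj_mul_aux _ _ _ _ hQ2, conj_mul_aux _ _ _ _ hQ2, hcommW]
  have hVblock : ∀ i j, e i ≠ e j → V' i j = 0 := by
    intro i j hij
    have h1 : V' i j * e j = e i * V' i j := by
      have h := congrFun (congrFun hVd i) j
      simpa [Matrix.mul_diagonal, Matrix.diagonal_mul] using h
    have h2 : (e i - e j) * V' i j = 0 := by linear_combination -h1
    rcases mul_eq_zero.mp h2 with h3 | h3
    · exact absurd (sub_eq_zero.mp h3) hij
    · exact h3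
  have hWblock : ∀ i j, e i ≠ e j → W' i j = 0 := by
    intro i j hij
    have h1 : W' i j * e j = e i * W' i j := by
      have h := congrFun (congrFun hWd i) j
      simpa [Matrix.mul_diagonal, Matrix.diagonal_mul] using h
    have h2 : (e i - e j) * W' i j = 0 := by linear_combination -h1
    rcases mul_eq_zero.mp h2 with h3 | h3
    · exact absurd (sub_eq_zero.mp h3) hij
    · exact h3
  have hstarQ : star Qm = Qmᵀ := by
    ext i j; simp [conjTranspose_apply]
  have hV'skew : ∀ i j, V' j i = -V' i j := by
    have ht : V'ᵀ = -V' := by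
      rw [hV'def, hstarQ, transpose_mul, transpose_mul, transpose_transpose, hV]
      simp [Matrix.mul_assoc]
    intro i j
    have h := congrFun (congrFun ht i) j
    simpa using h
  have hW'skew : ∀ i j, W' j i = -W' i j := by
    have ht : W'ᵀ = -W' := by
      rw [hW'def, hstarQ, transpose_mul, transpose_mul, transpose_transpose, hW]
      simp [Matrix.mul_assoc]
    intro i j
    have h := congrFun (congrFun ht i) j
    simpa using h
  -- the key commutation
  have hkey : V' * W' = W' * V' := by
    ext i j
    rw [Matrix.mul_apply, Matrix.mul_apply]
    by_cases hij : e i = e j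
    · set S : Finset (Fin n) := Finset.univ.filter (fun k => e k = e i) with hSdef
      have hiS : i ∈ S := by simp [hSdef]
      have hjS : j ∈ S := by simp [hSdef, hij.symm]
      have hsum1 : ∑ k, V' i k * W' k j = ∑ k ∈ S, V' i k * W' k j := by
        refine (Finset.sum_subset (Finset.subset_univ S) ?_).symm
        intro k _ hk
        have : e k ≠ e i := by simpa [hSdef] using hk
        rw [hVblock i k (Ne.symm this), zero_mul]
      have hsum2 : ∑ k, W' i k * V' k j = ∑ k ∈ S, W' i k * V' k j := by
        refine (Finset.sum_subset (Finset.subset_univ S) ?_).symm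
        intro k _ hk
        have : e k ≠ e i := by simpa [hSdef] using hk
        rw [hWblock i k (Ne.symm this), zero_mul]
      rw [hsum1, hsum2]
      have hcard : S.card ≤ 2 := hecard (e i)
      have hpos : 1 ≤ S.card := Finset.card_pos.mpr ⟨i, hiS⟩
      have hc12 : S.card = 1 ∨ S.card = 2 := by omega
      rcases hc12 with h1 | h2
      · obtain ⟨a, ha⟩ := Finset.card_eq_one.mp h1
        rw [ha] at hiS hjS
        have hia : i = a := Finset.mem_singleton.mp hiS
        have hja : j = a := Finset.mem_singleton.mp hjS
        subst hia; subst hja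
        rw [ha, Finset.sum_singleton, Finset.sum_singleton]
        ring
      · obtain ⟨a, b, hab, hS⟩ := Finset.card_eq_two.mp h2
        rw [hS] at hiS hjS
        have hvaa : V' a a = 0 := by have := hV'skew a a; linarith
        have hvbb : V' b b = 0 := by have := hV'skew b b; linarith
        have hwaa : W' a a = 0 := by have := hW'skew a a; linarith
        have hwbb : W' b b = 0 := by have := hW'skew b b; linarith
        have hvab : V' b a = -V' a b := hV'skew a b
        have hwab : W' b a = -W' a b := hW'skew a b
        rw [hS, Finset.sum_pair hab, Finset.sum_pair hab]
        have hi2 : i = a ∨ i = b := by simpa using hiS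
        have hj2 : j = a ∨ j = b := by simpa using hjS
        rcases hi2 with h | h <;> rcases hj2 with h' | h' <;> rw [h, h'] <;>
          simp only [hvaa, hvbb, hwaa, hwbb, hvab, hwab] <;> ring
    · refine Eq.trans (Finset.sum_eq_zero ?_) (Finset.sum_eq_zero ?_).symm
      · intro k _
        by_cases hk : e i = e k
        · rw [hWblock k j (by rw [← hk]; exact hij), mul_zero]
        · rw [hVblock i k hk, zero_mul]
      · intro k _
        by_cases hk : e i = e k
        · rw [hVblock k j (by rw [← hk]; exact hij), mul_zero]
        · rw [hWblock i k hk, zero_mul]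
  -- transport back
  have hVrec : V = Qm * V' * star Qm := by
    rw [hV'def]
    simp only [← Matrix.mul_assoc]
    rw [hQ2, Matrix.one_mul, Matrix.mul_assoc, hQ2, Matrix.mul_one]
  have hWrec : W = Qm * W' * star Qm := by
    rw [hW'def]
    simp only [← Matrix.mul_assoc]
    rw [hQ2, Matrix.one_mul, Matrix.mul_assoc, hQ2, Matrix.mul_one]
  calc V * W = (Qm * V' * star Qm) * (Qm * W' * star Qm) := by rw [← hVrec, ← hWrec]
    _ = Qm * (V' * W') * star Qm := conj_mul_aux _ _ _ _ hQ1
    _ = Qm * (W' * V') * star Qm := by rw [hkey]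
    _ = (Qm * W' * star Qm) * (Qm * V' * star Qm) := (conj_mul_aux _ _ _ _ hQ1).symm
    _ = W * V := by rw [← hVrec, ← hWrec]
end

section
/- Let 𝔫 be a two-step nilpotent Lie algebra with center 𝔷 satisfying [𝔫,𝔫] ⊊ 𝔷, equipped with an inner product, and let 𝔳 be the orthogonal complement of 𝔷 in 𝔫. Then the semidirect-sum subspace 𝔫₁ = [𝔫,𝔫] ⊕ 𝔳 is a Lie subalgebra of 𝔫, its derived algebra is [𝔫₁,𝔫₁] = [𝔫,𝔫], and the center of 𝔫₁ equals [𝔫,𝔫]. -/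
/-- Let 𝔫 be a two-step nilpotent real Lie algebra (bracket `B`, alternating,
with all triple brackets zero) carrying an inner product, with center 𝔷
strictly containing the derived algebra `d = [𝔫,𝔫]`, and let 𝔳 = 𝔷ᗮ.  Then
𝔫₁ = [𝔫,𝔫] ⊕ 𝔳 is a Lie subalgebra, its derived algebra is [𝔫₁,𝔫₁] = [𝔫,𝔫],
and the center of 𝔫₁ equals [𝔫,𝔫]. -/
theorem stmt_10 (n : Type*) [NormedAddCommGroup n] [InnerProductSpace ℝ n]
    [FiniteDimensional ℝ n]
    (B : n →ₗ[ℝ] n →ₗ[ℝ] n) (halt : ∀ x : n, B x x = 0)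
    (htwostep : ∀ x y z : n, B x (B y z) = 0)
    (z : Submodule ℝ n) (hz : ∀ x : n, x ∈ z ↔ ∀ y : n, B x y = 0)
    (d : Submodule ℝ n) (hd : d = Submodule.span ℝ {w : n | ∃ x y : n, w = B x y})
    (hlt : d < z)
    (v : Submodule ℝ n) (hv : v = zᗮ)
    (n1 : Submodule ℝ n) (hn1 : n1 = d ⊔ v) :
    (∀ x ∈ n1, ∀ y ∈ n1, B x y ∈ n1) ∧
    Submodule.span ℝ {w : n | ∃ x ∈ n1, ∃ y ∈ n1, w = B x y} = d ∧
    {x : n | x ∈ n1 ∧ ∀ y ∈ n1, B x y = 0} = (d : Set n) := by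
  -- basic facts
  have hskew : ∀ x y : n, B x y = - B y x := by
    intro x y
    have h := halt (x + y)
    simp only [map_add, LinearMap.add_apply, halt, zero_add, add_zero] at h
    rw [add_comm] at h
    exact eq_neg_of_add_eq_zero_left h
  have hBz : ∀ x ∈ z, ∀ y : n, B x y = 0 := fun x hx y => (hz x).1 hx y
  have hBz' : ∀ x : n, ∀ y ∈ z, B x y = 0 := by
    intro x y hy
    rw [hskew, hBz y hy, neg_zero]
  have hdz : d ≤ z := hlt.le
  have hBd : ∀ x y : n, B x y ∈ d := by
    intro x y
    rw [hd]
    exact Submodule.subset_span ⟨x, y, rfl⟩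
  have hdn1 : d ≤ n1 := hn1 ▸ le_sup_left
  have hvn1 : v ≤ n1 := hn1 ▸ le_sup_right
  have hsup : z ⊔ v = ⊤ := by
    rw [hv]; exact Submodule.sup_orthogonal_of_hasOrthogonalProjection
  -- reduction: every bracket is a bracket of elements of v
  have hred : ∀ x y : n, ∃ x' ∈ v, ∃ y' ∈ v, B x y = B x' y' := by
    intro x y
    obtain ⟨a, ha, b, hb, hx⟩ := Submodule.mem_sup.1 (hsup ▸ Submodule.mem_top : x ∈ z ⊔ v)
    obtain ⟨c, hc, e, he, hy⟩ := Submodule.mem_sup.1 (hsup ▸ Submodule.mem_top : y ∈ z ⊔ v)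
    refine ⟨b, hb, e, he, ?_⟩
    rw [← hx, ← hy]
    simp [map_add, hBz a ha, hBz' _ c hc]
  refine ⟨fun x _ y _ => hdn1 (hBd x y), ?_, ?_⟩
  · apply le_antisymm
    · rw [Submodule.span_le]
      rintro w ⟨x, -, y, -, rfl⟩
      exact hBd x y
    · rw [hd]
      apply Submodule.span_mono
      rintro w ⟨x, y, rfl⟩
      obtain ⟨x', hx', y', hy', hw⟩ := hred x y
      exact ⟨x', hvn1 hx', y', hvn1 hy', hw⟩
  · ext x
    simp only [Set.mem_setOf_eq, SetLike.mem_coe]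
    constructor
    · rintro ⟨hxn1, hcen⟩
      obtain ⟨a, ha, b, hb, hx⟩ := Submodule.mem_sup.1 (hn1 ▸ hxn1 : x ∈ d ⊔ v)
      have hbz : b ∈ z := by
        rw [hz]
        intro y
        obtain ⟨c, hc, e, he, hy⟩ := Submodule.mem_sup.1 (hsup ▸ Submodule.mem_top : y ∈ z ⊔ v)
        have h1 : B b y = B b e := by
          rw [← hy]; simp [map_add, hBz' _ c hc]
        have h2 : B x e = 0 := hcen e (hvn1 he)
        have h3 : B a e = 0 := hBz a (hdz ha) e
        rw [h1]
        have : B x e = B a e + B b e := by rw [← hx]; simp [map_add]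
        rw [h2, h3] at this
        simpa using this.symm
      have hb0 : b = 0 := by
        have hdisj : Disjoint z v := hv ▸ Submodule.orthogonal_disjoint z
        exact (Submodule.disjoint_def.1 hdisj) b hbz hb
      rw [← hx, hb0, add_zero]
      exact ha
    · intro hxd
      exact ⟨hdn1 hxd, fun y _ => hBz x (hdz hxd) y⟩
end

section
/- Fix t ≥ 1 and for (x,y) ∈ ℝ² let J_{x,y} = diag(C₁, C₂) ∈ so(8), where C₁ has rows (0,0,-x,y),(0,0,y,x),(x,-y,0,0),(-y,-x,0,0) and C₂ has rows (0,0,-tx,y),(0,0,y,tx),(tx,-y,0,0),(-y,-tx,0,0). Then for every X ∈ ℝ⁸ and every (x,y) ∈ ℝ², there exist α₁,…,α₆ ∈ ℝ such that the matrix Y = diag(D₁,D₂) satisfies Y·X = J_{x,y}·X and Y·J_{x,y} = J_{x,y}·Y, where D₁ has rows (0,-α₁,-α₂,-α₃),(α₁,0,α₃,-α₂),(α₂,-α₃,0,α₁),(α₃,α₂,-α₁,0) and D₂ has rows (0,-α₄,-α₅,-α₆),(α₄,0,α₆,-α₅),(α₅,-α₆,0,α₄),(α₆,α₅,-α₄,0).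 -/
open Matrix

def C1 (x y : ℝ) : Matrix (Fin 4) (Fin 4) ℝ :=
  !![0, 0, -x, y;
     0, 0, y, x;
     x, -y, 0, 0;
     -y, -x, 0, 0]

def C2 (t x y : ℝ) : Matrix (Fin 4) (Fin 4) ℝ :=
  !![0, 0, -t * x, y;
     0, 0, y, t * x;
     t * x, -y, 0, 0;
     -y, -t * x, 0, 0]

def Dmat (a1 a2 a3 : ℝ) : Matrix (Fin 4) (Fin 4) ℝ :=
  !![0, -a1, -a2, -a3;
     a1, 0, a3, -a2;
     a2, -a3, 0, a1;
     a3, a2, -a1, 0]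

lemma C2_eq (t x y : ℝ) : C2 t x y = C1 (t * x) y := by
  ext i j
  fin_cases i <;> fin_cases j <;> simp [C1, C2]

lemma Dmat_comm_C1 (a1 a2 a3 x y : ℝ) :
    Dmat a1 a2 a3 * C1 x y = C1 x y * Dmat a1 a2 a3 := by
  ext i j
  fin_cases i <;> fin_cases j <;>
    simp [Dmat, C1, Matrix.mul_apply, Fin.sum_univ_four, Matrix.vecHead, Matrix.vecTail] <;> ring

lemma Dmat_vec (x y : ℝ) (u : Fin 4 → ℝ) :
    ∃ a1 a2 a3 : ℝ, Dmat a1 a2 a3 *ᵥ u = C1 x y *ᵥ u := by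
  by_cases hs : u 0 ^ 2 + u 1 ^ 2 + u 2 ^ 2 + u 3 ^ 2 = 0
  · have h0 : u 0 = 0 := by nlinarith [sq_nonneg (u 0), sq_nonneg (u 1), sq_nonneg (u 2), sq_nonneg (u 3)]
    have h1 : u 1 = 0 := by nlinarith [sq_nonneg (u 0), sq_nonneg (u 1), sq_nonneg (u 2), sq_nonneg (u 3)]
    have h2 : u 2 = 0 := by nlinarith [sq_nonneg (u 0), sq_nonneg (u 1), sq_nonneg (u 2), sq_nonneg (u 3)]
    have h3 : u 3 = 0 := by nlinarith [sq_nonneg (u 0), sq_nonneg (u 1), sq_nonneg (u 2), sq_nonneg (u 3)]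
    refine ⟨0, 0, 0, ?_⟩
    ext i
    fin_cases i <;>
      simp [Dmat, C1, Matrix.mulVec, dotProduct, Fin.sum_univ_four,
        Matrix.vecHead, Matrix.vecTail, h0, h1, h2, h3]
  · refine ⟨(2*u 1*u 2*x - 2*u 1*u 3*y + 2*u 0*u 2*y + 2*u 0*u 3*x) / (u 0 ^ 2 + u 1 ^ 2 + u 2 ^ 2 + u 3 ^ 2),
            (u 2^2*x - 2*u 2*u 3*y - u 3^2*x + u 0^2*x - 2*u 0*u 1*y - u 1^2*x) / (u 0 ^ 2 + u 1 ^ 2 + u 2 ^ 2 + u 3 ^ 2),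
            (2*u 2*u 3*x - u 3^2*y + u 2^2*y - 2*u 0*u 1*x + u 1^2*y - u 0^2*y) / (u 0 ^ 2 + u 1 ^ 2 + u 2 ^ 2 + u 3 ^ 2), ?_⟩
    ext i
    fin_cases i <;>
      · simp [Dmat, C1, Matrix.mulVec, dotProduct, Fin.sum_univ_four,
          Matrix.vecHead, Matrix.vecTail]
        field_simp
        ring

/-- `J_{x,y} = diag(C₁, C₂) ∈ so(8)`. -/
def Jmat (t x y : ℝ) : Matrix (Fin 4 ⊕ Fin 4) (Fin 4 ⊕ Fin 4) ℝ :=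
  Matrix.fromBlocks (C1 x y) 0 0 (C2 t x y)

/-- For t ≥ 1, every X ∈ ℝ⁸ and every (x,y) ∈ ℝ², there are α₁,…,α₆ such that
Y = diag(D₁(α₁,α₂,α₃), D₂(α₄,α₅,α₆)) satisfies Y·X = J_{x,y}·X and commutes
with J_{x,y}. -/
theorem stmt_18 (t : ℝ) (ht : 1 ≤ t) (X : Fin 4 ⊕ Fin 4 → ℝ) (x y : ℝ) :
    ∃ a1 a2 a3 a4 a5 a6 : ℝ,
      (Matrix.fromBlocks (Dmat a1 a2 a3) 0 0 (Dmat a4 a5 a6)) *ᵥ X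
          = Jmat t x y *ᵥ X ∧
      (Matrix.fromBlocks (Dmat a1 a2 a3) 0 0 (Dmat a4 a5 a6)) * Jmat t x y
          = Jmat t x y * (Matrix.fromBlocks (Dmat a1 a2 a3) 0 0 (Dmat a4 a5 a6)) := by
  obtain ⟨a1, a2, a3, h1⟩ := Dmat_vec x y (X ∘ Sum.inl)
  obtain ⟨a4, a5, a6, h2⟩ := Dmat_vec (t * x) y (X ∘ Sum.inr)
  refine ⟨a1, a2, a3, a4, a5, a6, ?_, ?_⟩
  · rw [Jmat, Matrix.fromBlocks_mulVec, Matrix.fromBlocks_mulVec]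
    simp [h1, h2, C2_eq]
  · rw [Jmat, Matrix.fromBlocks_multiply, Matrix.fromBlocks_multiply]
    simp [C2_eq, Dmat_comm_C1]
end

section
/- Fix t > 1 and let 𝔫_t be the 10-dimensional two-step nilpotent Lie algebra with center 𝔷 = span(Z₁,Z₂) and 𝔳 = ℝ⁸, whose bracket is determined by J_{xZ₁+yZ₂} = diag(C₁,C₂) where C₁ has rows (0,0,-x,y),(0,0,y,x),(x,-y,0,0),(-y,-x,0,0) and C₂ has rows (0,0,-tx,y),(0,0,y,tx),(tx,-y,0,0),(-y,-tx,0,0). Then det(J_{xZ₁+yZ₂}) = ((x²+y²)(t²x²+y²))², so the Pfaffian form of 𝔫_t is (x²+y²)(t²x²+y²), which is positive for (x,y) ≠ (0,0); hence 𝔫_t is non-singular. -/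
open Matrix

lemma det_blockdiag {m n : Type} [Fintype m] [DecidableEq m] [Fintype n] [DecidableEq n]
    (A : Matrix m m ℝ) (D : Matrix n n ℝ) :
    (Matrix.fromBlocks A 0 0 D).det = A.det * D.det := by
  rw [Matrix.det_fromBlocks_zero₂₁]

set_option maxHeartbeats 1000000 in
lemma detC1 (x y : ℝ) : (C1 x y).det = ((x ^ 2 + y ^ 2)) ^ 2 := by
  rw [C1, Matrix.det_succ_row_zero]
  simp [Fin.sum_univ_succ, Matrix.det_fin_three, Matrix.submatrix, Fin.succAbove, Fin.castSucc, Fin.castAdd, Fin.castLE]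
  ring

set_option maxHeartbeats 1000000 in
lemma detC2 (t x y : ℝ) : (C2 t x y).det = ((t ^ 2 * x ^ 2 + y ^ 2)) ^ 2 := by
  rw [C2, Matrix.det_succ_row_zero]
  simp [Fin.sum_univ_succ, Matrix.det_fin_three, Matrix.submatrix, Fin.succAbove, Fin.castSucc, Fin.castAdd, Fin.castLE]
  ring

/-- For t > 1, the operators J_{xZ₁+yZ₂} = diag(C₁,C₂) of the 10-dimensional
two-step nilpotent Lie algebra 𝔫_t satisfy
det J = ((x²+y²)(t²x²+y²))², so the Pfaffian form is (x²+y²)(t²x²+y²), which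
is positive for (x,y) ≠ (0,0); hence every such J is invertible and 𝔫_t is
non-singular. -/
theorem stmt_19 (t : ℝ) (ht : 1 < t) :
    (∀ x y : ℝ, (Jmat t x y).det = ((x ^ 2 + y ^ 2) * (t ^ 2 * x ^ 2 + y ^ 2)) ^ 2) ∧
    (∀ x y : ℝ, ¬(x = 0 ∧ y = 0) →
      0 < (x ^ 2 + y ^ 2) * (t ^ 2 * x ^ 2 + y ^ 2) ∧ IsUnit (Jmat t x y)) := by

  have hdet : ∀ x y : ℝ, (Jmat t x y).det =
      ((x ^ 2 + y ^ 2) * (t ^ 2 * x ^ 2 + y ^ 2)) ^ 2 := by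
    intro x y
    rw [Jmat, det_blockdiag, detC1, detC2]
    ring
  refine ⟨hdet, fun x y h => ?_⟩
  have hx : x ^ 2 + y ^ 2 > 0 ∨ False := by
    left
    rcases not_and_or.mp h with hx | hy
    · positivity
    · positivity
  have hpos : 0 < (x ^ 2 + y ^ 2) * (t ^ 2 * x ^ 2 + y ^ 2) := by
    rcases not_and_or.mp h with hx | hy
    · have : 0 < t := lt_trans one_pos ht
      positivity
    · positivity
  refine ⟨hpos, ?_⟩
  rw [Matrix.isUnit_iff_isUnit_det, hdet, isUnit_iff_ne_zero]
  positivity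
end
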